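/- Let Σ be a signed graph on n vertices and let (Π₁,...,Π_n) and (Π'₁,...,Π'_n) be two lists of rooted signed graphs such that for each i, χ(Π_i,λ) = χ(Π'_i,λ) and χ(Π_i − r_i, λ) = χ(Π'_i − r'_i, λ). Then the rooted products Σ[Π₁,...,Π_n] and Σ[Π'₁,...,Π'_n] are cospectral. -/

import Mathlib

open Polynomial Matrix

lemma eval_charpoly'' {ι : Type*} [Fintype ι] [DecidableEq ι]
    (B : Matrix ι ι ℝ) (t : ℝ) :
    (B.charpoly).eval t = (t • (1 : Matrix ι ι ℝ) - B).det := by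
  have h : (t • (1 : Matrix ι ι ℝ) - B) = (charmatrix B).map (evalRingHom t) := by
    ext i j
    by_cases h : i = j
    · subst h; simp [charmatrix_apply_eq]
    · simp [charmatrix_apply_ne _ _ _ h, one_apply_ne h]
  rw [h, Matrix.charpoly, ← RingHom.mapMatrix_apply, ← RingHom.map_det]
  rfl

lemma det_updateRow_single' {k : ℕ} (A : Matrix (Fin k) (Fin k) ℝ) (r : Fin k) :
    (A.updateRow r (Pi.single r 1)).det
      = (A.submatrix (fun a : {a : Fin k // a ≠ r} => (a : Fin k))
          (fun a : {a : Fin k // a ≠ r} => (a : Fin k))).det := by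
  classical
  haveI : Unique {a : Fin k // a = r} := ⟨⟨⟨r, rfl⟩⟩, by rintro ⟨a, rfl⟩; rfl⟩
  rw [← det_submatrix_equiv_self (Equiv.sumCompl (fun a : Fin k => a = r))]
  have h : (A.updateRow r (Pi.single r 1)).submatrix
        (Equiv.sumCompl (fun a : Fin k => a = r)) (Equiv.sumCompl (fun a : Fin k => a = r))
      = fromBlocks 1 0
          (Matrix.of fun (a : {a : Fin k // a ≠ r}) (b : {a : Fin k // a = r}) => A a.val b.val)
          (A.submatrix (fun a : {a : Fin k // a ≠ r} => (a : Fin k))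
            (fun a : {a : Fin k // a ≠ r} => (a : Fin k))) := by
    ext x y
    rcases x with a | a
    · rcases a with ⟨a, rfl⟩
      rcases y with b | b
      · rcases b with ⟨b, rfl⟩
        simp
      · simp [Pi.single_eq_of_ne b.2]
    · rcases y with b | b
      · rcases b with ⟨b, rfl⟩
        simp [updateRow_ne a.2]
      · simp [updateRow_ne a.2]
  rw [h, det_fromBlocks_zero₁₂, det_one, one_mul]

lemma det_blockDiagonal'' {n : ℕ} {m : Fin n → ℕ}
    (M : ∀ i, Matrix (Fin (m i)) (Fin (m i)) ℝ) :
    (blockDiagonal' M).det = ∏ i, (M i).det := by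
  have hbt : BlockTriangular (blockDiagonal' M) Sigma.fst := by
    intro x y h
    obtain ⟨i, a⟩ := x; obtain ⟨j, b⟩ := y
    exact blockDiagonal'_apply_ne M a b (ne_of_gt h)
  rw [hbt.det_fintype]
  refine Finset.prod_congr rfl fun k _ => ?_
  rw [← det_submatrix_equiv_self
    (⟨fun a => ⟨⟨k, a⟩, rfl⟩, fun x => x.2 ▸ x.1.2,
     fun a => rfl, by rintro ⟨⟨i, a⟩, rfl⟩; rfl⟩ :
       Fin (m k) ≃ {x : (i : Fin n) × Fin (m i) // x.1 = k})]
  congr 1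
  ext a b
  simp [Matrix.toSquareBlock, Matrix.toSquareBlockProp, submatrix_apply]

lemma pointwise {n : ℕ} (AS : Matrix (Fin n) (Fin n) ℝ) {m : Fin n → ℕ}
    (Bm : ∀ i, Matrix (Fin (m i)) (Fin (m i)) ℝ) (r : ∀ i, Fin (m i))
    (R : Matrix ((i : Fin n) × Fin (m i)) ((i : Fin n) × Fin (m i)) ℝ)
    (hR : ∀ x y : (i : Fin n) × Fin (m i), R x y =
      if h : x.1 = y.1 then
        Bm x.1 x.2 (cast (congrArg (fun t => Fin (m t)) h.symm) y.2)
      else if x.2 = r x.1 ∧ y.2 = r y.1 then AS x.1 y.1 else 0)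
    (t : ℝ) (ht : ∀ i, ((Bm i).charpoly).eval t ≠ 0) :
    (t • (1 : Matrix ((i : Fin n) × Fin (m i)) ((i : Fin n) × Fin (m i)) ℝ) - R).det
      = (∏ i, ((Bm i).charpoly).eval t) *
        (1 - Matrix.of (fun i j : Fin n =>
          (((((Bm i).submatrix (fun a : {a : Fin (m i) // a ≠ r i} => (a : Fin (m i)))
              (fun a : {a : Fin (m i) // a ≠ r i} => (a : Fin (m i)))).charpoly).eval t)
            / ((Bm i).charpoly).eval t) *
          (if i = j then 0 else AS i j))).det := by
  classical
  set D : Matrix ((i : Fin n) × Fin (m i)) ((i : Fin n) × Fin (m i)) ℝ :=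
    blockDiagonal' (fun i => t • (1 : Matrix (Fin (m i)) (Fin (m i)) ℝ) - Bm i) with hD
  set U : Matrix ((i : Fin n) × Fin (m i)) (Fin n) ℝ :=
    Matrix.of fun x j => if x.1 = j ∧ x.2 = r x.1 then (1 : ℝ) else 0 with hU
  set C : Matrix (Fin n) (Fin n) ℝ :=
    Matrix.of fun i j => if i = j then (0 : ℝ) else AS i j with hC
  have hblock : ∀ i, (t • (1 : Matrix (Fin (m i)) (Fin (m i)) ℝ) - Bm i).det ≠ 0 := by
    intro i; rw [← eval_charpoly'']; exact ht i
  have hdetD : D.det = ∏ i, ((Bm i).charpoly).eval t := by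
    rw [hD, det_blockDiagonal'']
    exact Finset.prod_congr rfl fun i _ => (eval_charpoly'' (Bm i) t).symm
  have hdetD_ne : D.det ≠ 0 := by
    rw [hdetD]; exact Finset.prod_ne_zero_iff.mpr fun i _ => ht i
  have hDinv : D⁻¹ = blockDiagonal'
      (fun i => (t • (1 : Matrix (Fin (m i)) (Fin (m i)) ℝ) - Bm i)⁻¹) := by
    apply inv_eq_left_inv
    rw [hD, ← blockDiagonal'_mul]
    rw [show (fun k => (t • (1 : Matrix (Fin (m k)) (Fin (m k)) ℝ) - Bm k)⁻¹ *
        (t • 1 - Bm k)) = fun k => (1 : Matrix (Fin (m k)) (Fin (m k)) ℝ) from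
      funext fun k => nonsing_inv_mul _ (isUnit_iff_ne_zero.mpr (hblock k))]
    exact blockDiagonal'_one
  -- decomposition
  have hM : t • (1 : Matrix ((i : Fin n) × Fin (m i)) ((i : Fin n) × Fin (m i)) ℝ) - R
      = D + U * (-C) * Uᵀ := by
    ext x y
    obtain ⟨i, a⟩ := x; obtain ⟨j, b⟩ := y
    have hUC : ∀ p : Fin n, (U * (-C)) ⟨i, a⟩ p
        = if a = r i then -(C i p) else 0 := by
      intro p
      rw [mul_apply]
      rw [Finset.sum_eq_single i]
      · simp only [hU, hC, Matrix.of_apply, Matrix.neg_apply, ite_and]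
        split_ifs <;> simp_all
      · intro l _ hl
        simp [hU, ite_and, (Ne.symm hl)]
      · simp
    rw [Matrix.add_apply, mul_apply]
    simp only [transpose_apply]
    rw [Finset.sum_eq_single j]
    · rw [hUC j, Matrix.sub_apply, Matrix.smul_apply, hR]
      by_cases hij : i = j
      · subst hij
        simp only [Matrix.sub_apply, Matrix.smul_apply, blockDiagonal'_apply_eq, dif_pos rfl, hD, hU, hC,
          Matrix.of_apply]
        by_cases ha : a = r i <;> by_cases hb : b = r i <;>
          simp [ha, hb, one_apply, smul_eq_mul]
      · simp only [Matrix.sub_apply, Matrix.smul_apply, hD, hU, hC, Matrix.of_apply,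
          blockDiagonal'_apply_ne _ _ _ hij, dif_neg hij]
        have h1 : (1 : Matrix ((i : Fin n) × Fin (m i)) ((i : Fin n) × Fin (m i)) ℝ)
            ⟨i, a⟩ ⟨j, b⟩ = 0 := by
          apply one_apply_ne; intro hcon; exact hij (congrArg Sigma.fst hcon)
        rw [h1]
        by_cases ha : a = r i <;> by_cases hb : b = r j <;>
          simp [ha, hb, hij, smul_eq_mul]
    · intro l _ hl
      have h0 : U ⟨j, b⟩ l = 0 := by
        rw [hU]; exact if_neg (fun hcon => hl hcon.1.symm)
      rw [h0, mul_zero]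
    · simp
  have hkey : D * (1 + D⁻¹ * (U * (-C) * Uᵀ)) = t • 1 - R := by
    rw [Matrix.mul_add, Matrix.mul_one, ← Matrix.mul_assoc,
      mul_nonsing_inv _ (isUnit_iff_ne_zero.mpr hdetD_ne), Matrix.one_mul, hM]
  rw [← hkey, det_mul, hdetD]
  congr 1
  -- the diagonal computation
  have hdiag : Uᵀ * (D⁻¹ * U) = diagonal
      (fun i => (t • (1 : Matrix (Fin (m i)) (Fin (m i)) ℝ) - Bm i)⁻¹ (r i) (r i)) := by
    rw [hDinv]
    ext p q
    rw [mul_apply]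
    have inner : ∀ x : (i : Fin n) × Fin (m i),
        (blockDiagonal' (fun i => (t • (1 : Matrix (Fin (m i)) (Fin (m i)) ℝ) - Bm i)⁻¹) * U)
          x q
        = blockDiagonal' (fun i => (t • (1 : Matrix (Fin (m i)) (Fin (m i)) ℝ) - Bm i)⁻¹)
            x ⟨q, r q⟩ := by
      intro x
      rw [mul_apply, Finset.sum_eq_single (⟨q, r q⟩ : (i : Fin n) × Fin (m i))]
      · simp [hU]
      · intro y _ hy
        rcases y with ⟨c, d⟩
        by_cases h1 : c = q
        · subst h1
          by_cases h2 : d = r c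
          · exact absurd (by rw [h2]) hy
          · simp [hU, h2]
        · simp [hU, h1]
      · simp
    simp only [transpose_apply, inner]
    rw [Finset.sum_eq_single (⟨p, r p⟩ : (i : Fin n) × Fin (m i))]
    · by_cases hpq : p = q
      · subst hpq
        simp [hU, blockDiagonal'_apply_eq]
      · simp [hU, blockDiagonal'_apply_ne _ _ _ hpq, diagonal_apply_ne _ hpq]
    · intro y _ hy
      rcases y with ⟨c, d⟩
      by_cases h1 : c = p
      · subst h1
        by_cases h2 : d = r c
        · exact absurd (by rw [h2]) hy
        · simp [hU, h2]
      · simp [hU, h1]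
    · simp
  rw [show D⁻¹ * (U * (-C) * Uᵀ) = (D⁻¹ * (U * (-C))) * Uᵀ from (Matrix.mul_assoc _ _ _).symm]
  rw [det_one_add_mul_comm]
  have hrw : Uᵀ * (D⁻¹ * (U * (-C)))
      = -((diagonal (fun i => (t • (1 : Matrix (Fin (m i)) (Fin (m i)) ℝ) - Bm i)⁻¹
          (r i) (r i))) * C) := by
    rw [show D⁻¹ * (U * (-C)) = (D⁻¹ * U) * (-C) from (Matrix.mul_assoc _ _ _).symm,
      ← Matrix.mul_assoc, hdiag, Matrix.mul_neg]
  rw [hrw, ← sub_eq_add_neg]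
  congr 1
  congr 1
  ext p q
  rw [diagonal_mul]
  have hg : (t • (1 : Matrix (Fin (m p)) (Fin (m p)) ℝ) - Bm p)⁻¹ (r p) (r p)
      = (((((Bm p).submatrix (fun a : {a : Fin (m p) // a ≠ r p} => (a : Fin (m p)))
              (fun a : {a : Fin (m p) // a ≠ r p} => (a : Fin (m p)))).charpoly).eval t)
        / ((Bm p).charpoly).eval t) := by
    rw [Matrix.inv_def, Matrix.smul_apply, adjugate_apply, det_updateRow_single',
      Ring.inverse_eq_inv']
    have hsub : (t • (1 : Matrix (Fin (m p)) (Fin (m p)) ℝ) - Bm p).submatrix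
          (fun a : {a : Fin (m p) // a ≠ r p} => (a : Fin (m p)))
          (fun a : {a : Fin (m p) // a ≠ r p} => (a : Fin (m p)))
        = t • 1 - (Bm p).submatrix
          (fun a : {a : Fin (m p) // a ≠ r p} => (a : Fin (m p)))
          (fun a : {a : Fin (m p) // a ≠ r p} => (a : Fin (m p))) := by
      ext a b
      simp only [submatrix_apply, Matrix.sub_apply, Matrix.smul_apply, smul_eq_mul]
      congr 1
      by_cases hab : a = b
      · subst hab; simp
      · rw [one_apply_ne hab, one_apply_ne (fun hc => hab (Subtype.coe_injective hc))]
    rw [hsub, ← eval_charpoly'', eval_charpoly'' (Bm p) t, smul_eq_mul, div_eq_mul_inv,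
      mul_comm, eval_charpoly'']
  rw [hg, Matrix.of_apply, hC, Matrix.of_apply]

/-- If (Π₁,…,Π_n) and (Π'₁,…,Π'_n) are lists of rooted signed graphs such that
for each i, χ(Π_i) = χ(Π'_i) and χ(Π_i − r_i) = χ(Π'_i − r'_i), then the rooted
products Σ[Π₁,…,Π_n] and Σ[Π'₁,…,Π'_n] are cospectral. -/
theorem rooted_product_lists_cospectral (n : ℕ)
    (AS : Matrix (Fin n) (Fin n) ℝ)
    (m : Fin n → ℕ)
    (Bm Bm' : (i : Fin n) → Matrix (Fin (m i)) (Fin (m i)) ℝ)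
    (r r' : (i : Fin n) → Fin (m i))
    (hcos : ∀ i, (Bm i).charpoly = (Bm' i).charpoly)
    (hcosdel : ∀ i,
      ((Bm i).submatrix (fun a : {a : Fin (m i) // a ≠ r i} => (a : Fin (m i)))
        (fun a : {a : Fin (m i) // a ≠ r i} => (a : Fin (m i)))).charpoly
      = ((Bm' i).submatrix (fun a : {a : Fin (m i) // a ≠ r' i} => (a : Fin (m i)))
        (fun a : {a : Fin (m i) // a ≠ r' i} => (a : Fin (m i)))).charpoly)
    (R R' : Matrix ((i : Fin n) × Fin (m i)) ((i : Fin n) × Fin (m i)) ℝ)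
    (hR : ∀ x y : (i : Fin n) × Fin (m i), R x y =
      if h : x.1 = y.1 then
        Bm x.1 x.2 (cast (congrArg (fun t => Fin (m t)) h.symm) y.2)
      else if x.2 = r x.1 ∧ y.2 = r y.1 then AS x.1 y.1 else 0)
    (hR' : ∀ x y : (i : Fin n) × Fin (m i), R' x y =
      if h : x.1 = y.1 then
        Bm' x.1 x.2 (cast (congrArg (fun t => Fin (m t)) h.symm) y.2)
      else if x.2 = r' x.1 ∧ y.2 = r' y.1 then AS x.1 y.1 else 0) :
    R.charpoly = R'.charpoly := by

  classical
  apply Polynomial.eq_of_infinite_eval_eq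
  have hP : (∏ i, (Bm i).charpoly) ≠ 0 :=
    (Polynomial.monic_prod_of_monic _ _ fun i _ => Matrix.charpoly_monic _).ne_zero
  have hfin : {x : ℝ | (∏ i, (Bm i).charpoly).IsRoot x}.Finite :=
    Polynomial.finite_setOf_isRoot hP
  apply Set.Infinite.mono _ hfin.infinite_compl
  intro t ht
  simp only [Set.mem_compl_iff, Set.mem_setOf_eq, Polynomial.IsRoot, Polynomial.eval_prod] at ht
  have ht1 : ∀ i, ((Bm i).charpoly).eval t ≠ 0 := by
    intro i hz
    exact ht (Finset.prod_eq_zero (Finset.mem_univ i) hz)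
  have ht2 : ∀ i, ((Bm' i).charpoly).eval t ≠ 0 := fun i => (hcos i) ▸ ht1 i
  show (R.charpoly).eval t = (R'.charpoly).eval t
  rw [eval_charpoly'', eval_charpoly'', pointwise AS Bm r R hR t ht1,
    pointwise AS Bm' r' R' hR' t ht2]
  congr 1
  · exact Finset.prod_congr rfl fun i _ => by rw [hcos i]
  · congr 1
    congr 1
    funext i j
    simp only [Matrix.of_apply]
    rw [hcos i, hcosdel i]
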